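/- Let G = (V, E) be a finite connected oriented graph with capacities c_k > 0, let f ∈ ℝ^E with |f_k| ≤ c_k, and let h, j ∈ V. Suppose that for every subset U ⊆ V with h ∈ U and j ∉ U there exists an edge k of the cut (U, Uᶜ) that is not saturated in the direction from U to Uᶜ (i.e., f_k < c_k if k is oriented from U to Uᶜ, or f_k > −c_k if oriented from Uᶜ to U). Then there exists ε > 0 and a flow perturbation δ ∈ ℝ^E supported on a path from h to j such that f + δ still satisfies the capacity constraints and B(f+δ) = Bf + ε(e_h − e_j), where e_h, e_j denote standard basis vectors and B is the node-edge incidence matrix. -/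

import Mathlib

open Finset

lemma exists_nodup_chain' {α : Type*} {r : α → α → Prop} {a b : α}
    (h : Relation.ReflTransGen r a b) :
    ∃ vs : List α, vs.head? = some a ∧ vs.getLast? = some b ∧ vs.Nodup ∧ vs.Chain' r := by
  induction h using Relation.ReflTransGen.head_induction_on with
  | refl => exact ⟨[b], rfl, rfl, by simp, List.isChain_singleton _⟩
  | head hac hcb ih =>
    obtain ⟨vs, hhead, hlast, hnd, hch⟩ := ih
    rename_i a c
    by_cases hmem : a ∈ vs
    · obtain ⟨s, t, rfl⟩ := List.append_of_mem hmem
      refine ⟨a :: t, rfl, ?_, ?_, ?_⟩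
      · rw [List.getLast?_append] at hlast
        obtain ⟨z, hz⟩ := Option.isSome_iff_exists.mp
          (List.getLast?_isSome.mpr (List.cons_ne_nil a t))
        rw [hz] at hlast ⊢
        simpa using hlast
      · exact List.Nodup.sublist (List.sublist_append_right _ _) hnd
      · exact (List.isChain_append.mp hch).2.1
    · refine ⟨a :: vs, rfl, ?_, ?_, ?_⟩
      · cases vs with
        | nil => simp at hhead
        | cons x xs => rw [← hlast]; rfl
      · exact List.nodup_cons.mpr ⟨hmem, hnd⟩
      · refine List.isChain_cons.mpr ⟨?_, hch⟩
        intro y hy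
        rw [hhead] at hy
        cases hy
        exact hac

/-- augmenting-path lemma: in a finite connected oriented graph with capacities
`c k > 0` and a feasible flow `f` (`|f k| ≤ c k`), if for every `U ⊆ V` with `h ∈ U`, `j ∉ U`
some edge of the cut `(U, Uᶜ)` is not saturated in the direction from `U` to `Uᶜ`, then there
exist `ε > 0` and a perturbation `δ` supported on a path from `h` to `j` such that `f + δ`
is still feasible and `B(f + δ) = Bf + ε(e_h − e_j)`. -/
theorem stmt14 {m l : ℕ}
    (B : Fin m → Fin l → ℝ)
    -- B is the node-edge incidence matrix of an oriented graph: each edge has a tail (+1),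
    -- a head (−1), and zeros elsewhere
    (hB : ∀ k : Fin l, ∃ a b : Fin m, a ≠ b ∧ B a k = 1 ∧ B b k = -1 ∧
        ∀ v : Fin m, v ≠ a → v ≠ b → B v k = 0)
    -- the graph is connected
    (hconn : ∀ U : Finset (Fin m), U.Nonempty → U ≠ Finset.univ →
        ∃ (k : Fin l) (a b : Fin m), a ∈ U ∧ b ∉ U ∧ B a k ≠ 0 ∧ B b k ≠ 0)
    (c : Fin l → ℝ) (hc : ∀ k, 0 < c k)
    (f : Fin l → ℝ) (hf : ∀ k, |f k| ≤ c k)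
    (h j : Fin m) (hhj : h ≠ j)
    -- no h–j cut is saturated
    (hnosat : ∀ U : Finset (Fin m), h ∈ U → j ∉ U →
        ∃ (k : Fin l) (a b : Fin m), a ∈ U ∧ b ∉ U ∧
          ((B a k = 1 ∧ B b k = -1 ∧ f k < c k) ∨ (B b k = 1 ∧ B a k = -1 ∧ -c k < f k))) :
    ∃ (ε : ℝ) (δ : Fin l → ℝ) (vs : List (Fin m)),
      0 < ε ∧
      -- feasibility of the perturbed flow
      (∀ k, |f k + δ k| ≤ c k) ∧
      -- the perturbation changes the net injections by ε(e_h − e_j)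
      (∀ v : Fin m, ∑ k, B v k * (f k + δ k)
          = (∑ k, B v k * f k)
            + ε * ((if v = h then (1 : ℝ) else 0) - (if v = j then (1 : ℝ) else 0))) ∧
      -- vs is a path from h to j and δ is supported on its edges
      vs.head? = some h ∧ vs.getLast? = some j ∧ vs.Nodup ∧
      (∀ i : ℕ, ∀ a b : Fin m, vs[i]? = some a → vs[i + 1]? = some b →
          ∃ k : Fin l, δ k ≠ 0 ∧ B a k ≠ 0 ∧ B b k ≠ 0) ∧
      (∀ k : Fin l, δ k ≠ 0 →
          ∃ (i : ℕ) (a b : Fin m), vs[i]? = some a ∧ vs[i + 1]? = some b ∧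
            B a k ≠ 0 ∧ B b k ≠ 0) := by
  classical
  set step : Fin m → Fin m → Prop := fun a b => ∃ k : Fin l,
      (B a k = 1 ∧ B b k = -1 ∧ f k < c k) ∨ (B b k = 1 ∧ B a k = -1 ∧ -c k < f k)
    with hstepdef
  -- j is reachable from h in the residual graph
  have hreach : Relation.ReflTransGen step h j := by
    by_contra hnr
    set U : Finset (Fin m) := Finset.univ.filter (fun v => Relation.ReflTransGen step h v)
      with hUdef
    have hhU : h ∈ U := by simp [hUdef, Relation.ReflTransGen.refl]
    have hjU : j ∉ U := by simp [hUdef, hnr]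
    obtain ⟨k, a, b, haU, hbU, hcond⟩ := hnosat U hhU hjU
    have ha : Relation.ReflTransGen step h a := by simpa [hUdef] using haU
    have hb : Relation.ReflTransGen step h b := ha.tail ⟨k, hcond⟩
    exact hbU (by simp [hUdef, hb])
  obtain ⟨vs, hhead, hlast, hnd, hch⟩ := exists_nodup_chain' hreach
  have hne : vs ≠ [] := by intro hv; rw [hv] at hhead; simp at hhead
  -- basic facts about vs via the function W
  set n : ℕ := vs.length with hn
  have hnpos : 0 < n := List.length_pos_iff.mpr hne
  set W : ℕ → Fin m := fun i => vs.getD i h with hWdef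
  have hWe : ∀ i (hi : i < n), W i = vs.get ⟨i, hi⟩ := by
    intro i hi
    rw [hWdef]
    simp only [List.getD_eq_getElem _ _ hi, List.get_eq_getElem]
  have hWget : ∀ i (hi : i < n), vs[i]? = some (W i) := by
    intro i hi
    rw [List.getElem?_eq_getElem hi, hWe i hi, List.get_eq_getElem]
  have hW0 : W 0 = h := by
    have := hWget 0 hnpos
    rw [← List.head?_eq_getElem?, hhead] at this
    exact (Option.some.inj this).symm
  have hWlast : W (n - 1) = j := by
    have h1 : vs.getLast hne = j := by
      rw [List.getLast?_eq_getLast_of_ne_nil hne] at hlast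
      exact Option.some.inj hlast
    rw [hWe (n - 1) (by omega), ← h1, List.getLast_eq_getElem]
    simp [List.get_eq_getElem]; rfl
  have hstepW : ∀ i, i + 1 < n → step (W i) (W (i + 1)) := by
    intro i hi
    have := List.isChain_iff_getElem.mp hch i (by omega)
    rw [hWe i (by omega), hWe (i + 1) hi]
    exact this
  have hWinj : ∀ i i', i < n → i' < n → W i = W i' → i = i' := by
    intro i i' hi hi' hw
    have := List.nodup_iff_injective_get.mp hnd
    have h2 : vs.get ⟨i, hi⟩ = vs.get ⟨i', hi'⟩ := by
      rw [← hWe i hi, ← hWe i' hi']; exact hw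
    exact Fin.mk.inj_iff.mp (this h2)
  -- n ≥ 2
  have hn2 : 2 ≤ n := by
    by_contra hlt
    have : n = 1 := by omega
    exact hhj (by rw [← hW0, ← hWlast, this])
  set N : ℕ := n - 1 with hN
  have hNn : n = N + 1 := by omega
  have hNpos : 0 < N := by omega
  haveI : NeZero N := ⟨by omega⟩
  -- choose an edge for each step
  have hex : ∀ i : Fin N, ∃ k : Fin l,
      (B (W i) k = 1 ∧ B (W (i + 1)) k = -1 ∧ f k < c k) ∨
      (B (W (i + 1)) k = 1 ∧ B (W i) k = -1 ∧ -c k < f k) := by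
    intro i
    exact hstepW i (by omega)
  set K : Fin N → Fin l := fun i => (hex i).choose with hKdef
  have hK := fun i => (hex i).choose_spec
  set σ : Fin N → ℝ := fun i => if B (W i) (K i) = 1 then 1 else -1 with hσdef
  have hσpm : ∀ i, σ i = 1 ∨ σ i = -1 := by
    intro i; rw [hσdef]; dsimp only; split <;> simp
  have hσne : ∀ i, σ i ≠ 0 := by
    intro i; rcases hσpm i with h1 | h1 <;> rw [h1] <;> norm_num
  have hBW : ∀ i : Fin N, B (W i) (K i) = σ i ∧ B (W (i + 1)) (K i) = -σ i := by
    intro i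
    rcases hK i with ⟨h1, h2, _⟩ | ⟨h1, h2, _⟩
    · have hs : σ i = 1 := by rw [hσdef]; exact if_pos h1
      exact ⟨by rw [hs, h1], by rw [hs, h2]⟩
    · have hs : σ i = -1 := by rw [hσdef]; dsimp only; rw [h2]; norm_num
      exact ⟨by rw [hs, h2], by rw [hs, h1]; norm_num⟩
  set r : Fin N → ℝ := fun i => c (K i) - σ i * f (K i) with hrdef
  have hrpos : ∀ i, 0 < r i := by
    intro i
    rcases hK i with ⟨h1, _, h3⟩ | ⟨_, h2, h3⟩
    · have hs : σ i = 1 := by rw [hσdef]; exact if_pos h1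
      show 0 < c (K i) - σ i * f (K i)
      rw [hs]; linarith
    · have hs : σ i = -1 := by rw [hσdef]; dsimp only; rw [h2]; norm_num
      show 0 < c (K i) - σ i * f (K i)
      rw [hs]; linarith
  have hWne : ∀ i : Fin N, W i ≠ W (i + 1) := by
    intro i hw
    have := hWinj i (i + 1) (by omega) (by omega) hw
    omega
  -- pair structure of edges
  have hpair : ∀ (i : Fin N) (v : Fin m), v ≠ W i → v ≠ W (i + 1) → B v (K i) = 0 := by
    intro i v hv1 hv2
    obtain ⟨a, b, hab, ha, hb, hz⟩ := hB (K i)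
    obtain ⟨hBa, hBb⟩ := hBW i
    have hWi : W i = a ∨ W i = b := by
      by_contra hcon
      push_neg at hcon
      have := hz _ hcon.1 hcon.2
      rw [this] at hBa
      exact hσne i hBa.symm
    have hWi1 : W (i + 1) = a ∨ W (i + 1) = b := by
      by_contra hcon
      push_neg at hcon
      have := hz _ hcon.1 hcon.2
      rw [this] at hBb
      have := hσne i
      rcases hσpm i with h1 | h1 <;> rw [h1] at hBb <;> norm_num at hBb
    have hwne := hWne i
    rcases hWi with h1 | h1 <;> rcases hWi1 with h2 | h2
    · exact absurd (h1.trans h2.symm) hwne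
    · exact hz v (h1 ▸ hv1) (h2 ▸ hv2)
    · exact hz v (h2 ▸ hv2) (h1 ▸ hv1)
    · exact absurd (h1.trans h2.symm) hwne
  -- K is injective
  have hKinj : Function.Injective K := by
    intro i i' hk
    by_contra hne'
    have hBi' : B (W i') (K i) = σ i' := by rw [hk]; exact (hBW i').1
    have hBi'1 : B (W (i' + 1)) (K i) = -σ i' := by rw [hk]; exact (hBW i').2
    have h1 : W i' = W i ∨ W i' = W (i + 1) := by
      by_contra hcon
      push_neg at hcon
      rw [hpair i _ hcon.1 hcon.2] at hBi'
      exact hσne i' hBi'.symm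
    have h2 : W (i' + 1) = W i ∨ W (i' + 1) = W (i + 1) := by
      by_contra hcon
      push_neg at hcon
      rw [hpair i _ hcon.1 hcon.2] at hBi'1
      rcases hσpm i' with hs | hs <;> rw [hs] at hBi'1 <;> norm_num at hBi'1
    have hii' : (i : ℕ) ≠ (i' : ℕ) := fun hcc => hne' (Fin.ext hcc)
    rcases h1 with ha | ha
    · exact hii' (hWinj i' i (by omega) (by omega) ha).symm
    · have e1 : (i' : ℕ) = i + 1 := hWinj i' (i + 1) (by omega) (by omega) ha
      rcases h2 with hb | hb
      · have e2 : (i' : ℕ) + 1 = i := hWinj (i' + 1) i (by omega) (by omega) hb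
        omega
      · have e2 : (i' : ℕ) + 1 = i + 1 := hWinj (i' + 1) (i + 1) (by omega) (by omega) hb
        omega
  -- ε and δ
  have hun : (Finset.univ : Finset (Fin N)).Nonempty := Finset.univ_nonempty
  set ε : ℝ := Finset.univ.inf' hun r with hεdef
  have hεpos : 0 < ε := by
    rw [hεdef, Finset.lt_inf'_iff]
    intro i _
    exact hrpos i
  have hεle : ∀ i, ε ≤ r i := fun i => Finset.inf'_le _ (Finset.mem_univ i)
  set δ : Fin l → ℝ := fun k => ∑ i : Fin N, if k = K i then ε * σ i else 0 with hδdef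
  have hδK : ∀ i, δ (K i) = ε * σ i := by
    intro i
    rw [hδdef]
    dsimp only
    rw [Finset.sum_eq_single i]
    · simp
    · intro i' _ hne'
      rw [if_neg]
      intro hk
      exact hne' (hKinj hk.symm)
    · intro hni; exact absurd (Finset.mem_univ i) hni
  have hδ0 : ∀ k, (∀ i, k ≠ K i) → δ k = 0 := by
    intro k hk
    rw [hδdef]
    exact Finset.sum_eq_zero fun i _ => if_neg (hk i)
  refine ⟨ε, δ, vs, hεpos, ?_, ?_, hhead, hlast, hnd, ?_, ?_⟩
  -- feasibility
  · intro k
    by_cases hk : ∃ i, k = K i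
    · obtain ⟨i, rfl⟩ := hk
      rw [hδK i]
      have h1 : ε ≤ c (K i) - σ i * f (K i) := hεle i
      have h2 := abs_le.mp (hf (K i))
      rcases hσpm i with hs | hs <;> rw [hs] at h1 ⊢ <;> rw [abs_le] <;>
        constructor <;> nlinarith [hεpos, hc (K i)]
    · push_neg at hk
      rw [hδ0 k hk]
      simpa using hf k
  -- divergence
  · intro v
    have key : ∑ k, B v k * δ k
        = ε * ((if v = h then (1 : ℝ) else 0) - (if v = j then (1 : ℝ) else 0)) := by
      have step1 : ∀ k, B v k * δ k = ∑ i : Fin N, if k = K i then B v k * (ε * σ i) else 0 := by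
        intro k
        rw [hδdef]
        dsimp only
        rw [Finset.mul_sum]
        congr 1
        ext i
        split <;> simp [mul_comm]
      rw [Finset.sum_congr rfl fun k _ => step1 k, Finset.sum_comm]
      have step2 : ∀ i : Fin N,
          (∑ k, if k = K i then B v k * (ε * σ i) else 0) = B v (K i) * (ε * σ i) := by
        intro i
        rw [Finset.sum_ite_eq' Finset.univ (K i) (fun k => B v k * (ε * σ i))]
        simp
      rw [Finset.sum_congr rfl fun i _ => step2 i]
      have step3 : ∀ i : Fin N, B v (K i) * (ε * σ i)
          = ε * ((if v = W i then (1:ℝ) else 0) - (if v = W ((i : ℕ) + 1) then (1:ℝ) else 0)) := by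
        intro i
        obtain ⟨hBa, hBb⟩ := hBW i
        have hσsq : σ i * σ i = 1 := by
          rcases hσpm i with hs | hs <;> rw [hs] <;> ring
        by_cases hv1 : v = W i
        · have hv2 : v ≠ W ((i : ℕ) + 1) := fun hcc => hWne i ((hv1.symm.trans hcc))
          rw [hv1, hBa, if_pos rfl, if_neg (hv1 ▸ hv2)]
          nlinarith [hσsq]
        · by_cases hv2 : v = W ((i : ℕ) + 1)
          · rw [hv2, hBb, if_neg (fun hcc => hv1 (hv2.trans hcc ▸ hcc ▸ rfl)), if_pos rfl]
            · nlinarith [hσsq]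
          · rw [hpair i v hv1 hv2, if_neg hv1, if_neg hv2]
            ring
      rw [Finset.sum_congr rfl fun i _ => step3 i, ← Finset.mul_sum]
      congr 1
      rw [Fin.sum_univ_eq_sum_range
        (fun i => (if v = W i then (1:ℝ) else 0) - (if v = W (i + 1) then (1:ℝ) else 0))]
      rw [Finset.sum_range_sub' (fun i => if v = W i then (1:ℝ) else 0)]
      rw [hW0]
      have : W N = j := by rw [← hWlast, hN]
      rw [this]
    calc ∑ k, B v k * (f k + δ k) = ∑ k, (B v k * f k + B v k * δ k) := by
          congr 1; ext k; ring
      _ = ∑ k, B v k * f k + ∑ k, B v k * δ k := Finset.sum_add_distrib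
      _ = _ := by rw [key]
  -- forward path condition
  · intro i a b hga hgb
    have hi1 : i + 1 < n := by
      by_contra hcon
      push_neg at hcon
      rw [List.getElem?_eq_none (by omega)] at hgb
      simp at hgb
    have ha : a = W i := by
      have := hWget i (by omega)
      rw [this] at hga; exact Option.some.inj hga.symm
    have hb : b = W (i + 1) := by
      have := hWget (i + 1) hi1
      rw [this] at hgb; exact Option.some.inj hgb.symm
    set i' : Fin N := ⟨i, by omega⟩ with hi'def
    refine ⟨K i', ?_, ?_, ?_⟩
    · rw [hδK i']
      exact mul_ne_zero (ne_of_gt hεpos) (hσne i')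
    · obtain ⟨hBa, _⟩ := hBW i'
      rw [ha]
      have : W i = W (i' : ℕ) := rfl
      rw [this, hBa]
      exact hσne i'
    · obtain ⟨_, hBb⟩ := hBW i'
      rw [hb]
      have : W (i + 1) = W ((i' : ℕ) + 1) := rfl
      rw [this, hBb]
      intro hcc
      exact hσne i' (by linarith [neg_eq_zero.mp hcc])
  -- backward support condition
  · intro k hkne
    have hk : ∃ i, k = K i := by
      by_contra hcon
      push_neg at hcon
      exact hkne (hδ0 k hcon)
    obtain ⟨i, rfl⟩ := hk
    refine ⟨i, W i, W ((i : ℕ) + 1), hWget i (by omega), hWget ((i : ℕ) + 1) (by omega), ?_, ?_⟩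
    · rw [(hBW i).1]; exact hσne i
    · rw [(hBW i).2]
      intro hcc
      exact hσne i (by linarith [neg_eq_zero.mp hcc])
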